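/- Let D be a central division algebra of prime degree p over a field K, and let T be a K-torus in SL_1(D) of rank r < p - 1. Then T splits over a Galois extension L/K whose degree is prime to p, and consequently D ⊗_K L remains a division algebra. -/

import Mathlib

open Matrix
open scoped TensorProduct

noncomputable section

open Polynomial in
private lemma gl_no_p_torsion {p r : ℕ} (hp : p.Prime) (hr : r < p - 1)
    (A : GL (Fin r) ℤ) (hA : A ^ p = 1) : A = 1 := by
  haveI : Fact p.Prime := ⟨hp⟩
  set f : Matrix (Fin r) (Fin r) ℤ →+* Matrix (Fin r) (Fin r) ℚ :=
    (Int.castRingHom ℚ).mapMatrix with hf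
  have hAv : ((A : Matrix (Fin r) (Fin r) ℤ)) ^ p = 1 := by
    have := congrArg (Units.val) hA; simpa using this
  set B : Matrix (Fin r) (Fin r) ℚ := f (A : Matrix (Fin r) (Fin r) ℤ) with hB
  have hcast : B ^ p = 1 := by rw [hB, ← map_pow, hAv, _root_.map_one]
  have haev : aeval B ((X : ℚ[X]) ^ p - 1) = 0 := by simp [hcast]
  have hdvd : minpoly ℚ B ∣ (X : ℚ[X]) ^ p - 1 := minpoly.dvd ℚ B haev
  have hint : IsIntegral ℚ B := ⟨Matrix.charpoly B, Matrix.charpoly_monic B,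
    Matrix.aeval_self_charpoly B⟩
  have hmd : (minpoly ℚ B).natDegree ≤ r := by
    have h1 : minpoly ℚ B ∣ Matrix.charpoly B :=
      minpoly.dvd ℚ B (Matrix.aeval_self_charpoly B)
    have := Polynomial.natDegree_le_of_dvd h1 (Matrix.charpoly_monic B).ne_zero
    simpa [Matrix.charpoly_natDegree_eq_dim] using this
  have hfac : (X : ℚ[X]) ^ p - 1 = Polynomial.cyclotomic p ℚ * (X - 1) := by
    rw [Polynomial.cyclotomic_prime ℚ p, geom_sum_mul]
  have hirr : Irreducible (Polynomial.cyclotomic p ℚ) :=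
    Polynomial.cyclotomic.irreducible_rat hp.pos
  have hnotdvd : ¬ (Polynomial.cyclotomic p ℚ ∣ minpoly ℚ B) := by
    intro h
    have hne : minpoly ℚ B ≠ 0 := minpoly.ne_zero hint
    have := Polynomial.natDegree_le_of_dvd h hne
    rw [Polynomial.natDegree_cyclotomic, Nat.totient_prime hp] at this
    omega
  have hcop : IsCoprime (minpoly ℚ B) (Polynomial.cyclotomic p ℚ) :=
    (hirr.coprime_iff_not_dvd.mpr hnotdvd).symm
  have hdvd' : minpoly ℚ B ∣ (X : ℚ[X]) - 1 := by
    rw [hfac] at hdvd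
    exact hcop.dvd_of_dvd_mul_left hdvd
  have hB0 : aeval B ((X : ℚ[X]) - 1) = 0 := by
    obtain ⟨c, hc⟩ := hdvd'
    rw [hc, _root_.map_mul, minpoly.aeval, zero_mul]
  have hB1 : B = 1 := by
    have : B - 1 = 0 := by simpa using hB0
    exact sub_eq_zero.mp this
  have hval : (A : Matrix (Fin r) (Fin r) ℤ) = 1 := by
    have hinj : Function.Injective f := by
      intro x y hxy
      ext i j
      have h2 : ((x i j : ℚ)) = (y i j : ℚ) := by
        simpa [hf, RingHom.mapMatrix_apply, Matrix.map_apply] using congrFun (congrFun hxy i) j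
      exact_mod_cast h2
    apply hinj
    rw [← hB, hB1, _root_.map_one]
  exact Units.ext hval

private theorem finrank_dvd_of_leftmul_closed (K : Type) [Field K] (E : Type) [DivisionRing E]
    [Algebra K E] (A : Type) [Ring A] [Algebra K A] (φ : E →ₐ[K] A) (N : Submodule K A)
    (hN : ∀ (e : E) (x : A), x ∈ N → φ e * x ∈ N) :
    ∃ m, Module.finrank K ↥N = Module.finrank K E * m := by
  letI instS : SMul E ↥N := ⟨fun e x => ⟨φ e * (x : A), hN e x x.2⟩⟩
  have smul_def : ∀ (e : E) (x : ↥N), ((e • x : ↥N) : A) = φ e * (x : A) := fun _ _ => rfl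
  letI instM : Module E ↥N :=
    { smul := (· • ·)
      one_smul := fun x => Subtype.ext (by rw [smul_def, _root_.map_one, one_mul])
      mul_smul := fun e e' x => Subtype.ext (by
        rw [smul_def, smul_def, smul_def, _root_.map_mul, mul_assoc])
      smul_zero := fun e => Subtype.ext (by
        rw [smul_def]; show φ e * 0 = 0; rw [mul_zero])
      smul_add := fun e x y => Subtype.ext (by
        rw [smul_def]; show φ e * ((x : A) + y) = _; rw [mul_add]; rfl)
      add_smul := fun e e' x => Subtype.ext (by
        rw [smul_def, map_add, add_mul]; rfl)
      zero_smul := fun x => Subtype.ext (by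
        rw [smul_def, map_zero, zero_mul]; rfl) }
  haveI : IsScalarTower K E ↥N := ⟨fun k e x => Subtype.ext (by
    rw [smul_def]
    show φ (k • e) * (x : A) = k • (e • x : ↥N)
    rw [_root_.map_smul, smul_mul_assoc, smul_def])⟩
  exact ⟨Module.finrank E ↥N, (Module.finrank_mul_finrank K E ↥N).symm⟩

private theorem tensor_div {K D : Type} [Field K] [DivisionRing D] [Algebra K D] {p : ℕ}
    (hp : p.Prime) (hdim : Module.finrank K D = p ^ 2)
    (L : Type) [Field L] [Algebra K L] [FiniteDimensional K L]
    (hn : ¬ p ∣ Module.finrank K L) :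
    Nontrivial (D ⊗[K] L) ∧ ∀ z : D ⊗[K] L, z ≠ 0 → IsUnit z := by
  haveI hDfin : FiniteDimensional K D := by
    apply FiniteDimensional.of_finrank_pos
    rw [hdim]; exact pow_pos hp.pos 2
  have hnpos : 0 < Module.finrank K L := Module.finrank_pos
  have hA : Module.finrank K (D ⊗[K] L) = p ^ 2 * Module.finrank K L := by
    rw [Module.finrank_tensorProduct, hdim]
  haveI hAfin : FiniteDimensional K (D ⊗[K] L) := Module.Finite.tensorProduct K D L
  have hApos : 0 < Module.finrank K (D ⊗[K] L) := by
    rw [hA]; exact Nat.mul_pos (pow_pos hp.pos 2) hnpos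
  haveI hnt : Nontrivial (D ⊗[K] L) := Module.nontrivial_of_finrank_pos hApos
  refine ⟨hnt, ?_⟩
  have key : ∀ z : D ⊗[K] L, z ≠ 0 → ∃ w, w * z = 1 := by
    intro z hz
    let N : Submodule K (D ⊗[K] L) :=
      { carrier := {w | w * z = 0}
        add_mem' := by intro a b ha hb; simp only [Set.mem_setOf_eq] at *;
                       rw [add_mul, ha, hb, add_zero]
        zero_mem' := by simp
        smul_mem' := by intro c a ha; simp only [Set.mem_setOf_eq] at *;
                        rw [smul_mul_assoc, ha, smul_zero] }
    have hNmem : ∀ w : D ⊗[K] L, w ∈ N ↔ w * z = 0 := fun _ => Iff.rfl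
    by_cases hNbot : N = ⊥
    · have hinj : Function.Injective (LinearMap.mulRight K z) := by
        rw [← LinearMap.ker_eq_bot]
        apply (Submodule.eq_bot_iff _).mpr
        intro w hw
        have hwN : w ∈ N := by
          rw [hNmem]
          simpa [LinearMap.mulRight_apply] using hw
        rw [hNbot] at hwN
        simpa using hwN
      have hsurj : Function.Surjective (LinearMap.mulRight K z) :=
        LinearMap.surjective_of_injective hinj
      obtain ⟨w, hw⟩ := hsurj 1
      exact ⟨w, by simpa [LinearMap.mulRight_apply] using hw⟩
    · exfalso
      have hmulD : ∀ (e : D) (x : D ⊗[K] L), x ∈ N →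
          (Algebra.TensorProduct.includeLeft : D →ₐ[K] D ⊗[K] L) e * x ∈ N := by
        intro e x hx
        rw [hNmem] at hx ⊢
        rw [mul_assoc, hx, mul_zero]
      have hmulL : ∀ (e : L) (x : D ⊗[K] L), x ∈ N →
          (Algebra.TensorProduct.includeRight : L →ₐ[K] D ⊗[K] L) e * x ∈ N := by
        intro e x hx
        rw [hNmem] at hx ⊢
        rw [mul_assoc, hx, mul_zero]
      obtain ⟨m₁, hm₁⟩ := finrank_dvd_of_leftmul_closed K D (D ⊗[K] L)
        Algebra.TensorProduct.includeLeft N hmulD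
      obtain ⟨m₂, hm₂⟩ := finrank_dvd_of_leftmul_closed K L (D ⊗[K] L)
        Algebra.TensorProduct.includeRight N hmulL
      have hNpos : 0 < Module.finrank K ↥N := by
        apply Module.finrank_pos_iff.mpr
        exact Submodule.nontrivial_iff_ne_bot.mpr hNbot
      have hm₂pos : 0 < m₂ := by
        rcases Nat.eq_zero_or_pos m₂ with h | h
        · rw [h, Nat.mul_zero] at hm₂; omega
        · exact h
      have hdvd2 : p ^ 2 ∣ m₂ := by
        have hd : p ^ 2 ∣ Module.finrank K L * m₂ := by
          rw [← hm₂, hm₁, hdim]; exact ⟨m₁, rfl⟩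
        have hcop : Nat.Coprime (p ^ 2) (Module.finrank K L) :=
          Nat.Coprime.pow_left _ ((Nat.Prime.coprime_iff_not_dvd hp).mpr hn)
        exact hcop.dvd_of_dvd_mul_left hd
      have hge : p ^ 2 ≤ m₂ := Nat.le_of_dvd hm₂pos hdvd2
      have hle : Module.finrank K ↥N ≤ Module.finrank K (D ⊗[K] L) := Submodule.finrank_le N
      have hgeK : p ^ 2 * Module.finrank K L ≤ Module.finrank K ↥N := by
        calc p ^ 2 * Module.finrank K L = Module.finrank K L * p ^ 2 := by ring
        _ ≤ Module.finrank K L * m₂ := Nat.mul_le_mul_left _ hge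
        _ = Module.finrank K ↥N := hm₂.symm
      have hNtop : N = ⊤ := Submodule.eq_top_of_finrank_eq (by omega)
      have h1N : (1 : D ⊗[K] L) ∈ N := hNtop ▸ Submodule.mem_top
      rw [hNmem, one_mul] at h1N
      exact hz h1N
  intro z hz
  obtain ⟨w, hw⟩ := key z hz
  have hw0 : w ≠ 0 := by
    intro h
    rw [h, zero_mul] at hw
    exact one_ne_zero hw.symm
  obtain ⟨u, hu⟩ := key w hw0
  have huz : u = z := by
    calc u = u * (w * z) := by rw [hw, mul_one]
    _ = (u * w) * z := by rw [mul_assoc]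
    _ = z := by rw [hu, one_mul]
  exact ⟨⟨z, w, huz ▸ hu, hw⟩, rfl⟩

set_option maxHeartbeats 2000000
set_option synthInstance.maxHeartbeats 400000

/-- Let `D` be a central division algebra of prime degree `p` over `K`, and let `T` be a
`K`-torus in `SL_1(D)` of rank `r < p - 1`, encoded by the Galois action
`ρ : Gal(K̄/K) → GL_r(ℤ)` on its character lattice `ℤ^r` (which factors through a finite
quotient, i.e. has open kernel).  Then `T` splits over a finite Galois extension `L/K`
of degree prime to `p` (i.e. `ρ` kills all automorphisms fixing `L`), and consequently
`D ⊗_K L` remains a division algebra. -/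
theorem torus_splits_over_prime_to_p_extension
    {K D : Type} [Field K] [DivisionRing D] [Algebra K D]
    {p r : ℕ} (hp : p.Prime)
    (hcentral : Subalgebra.center K D = ⊥)
    (hdim : Module.finrank K D = p ^ 2)
    (hr : r < p - 1)
    (ρ : (AlgebraicClosure K ≃ₐ[K] AlgebraicClosure K) →* GL (Fin r) ℤ)
    -- `ρ` is continuous: it kills the automorphisms fixing some finite subextension
    (hopen : ∃ L₀ : IntermediateField K (AlgebraicClosure K), FiniteDimensional K L₀ ∧
      ∀ g : AlgebraicClosure K ≃ₐ[K] AlgebraicClosure K, (∀ x ∈ L₀, g x = x) → ρ g = 1) :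
    ∃ L : IntermediateField K (AlgebraicClosure K),
      FiniteDimensional K L ∧ IsGalois K L ∧
      ¬ (p ∣ Module.finrank K L) ∧
      (∀ g : AlgebraicClosure K ≃ₐ[K] AlgebraicClosure K, (∀ x ∈ L, g x = x) → ρ g = 1) ∧
      Nontrivial (D ⊗[K] L) ∧
      ∀ z : D ⊗[K] L, z ≠ 0 → IsUnit z := by
  classical
  obtain ⟨L₀, hL₀fin, hL₀kill⟩ := hopen
  set Ω := AlgebraicClosure K with hΩ
  let Ksep : IntermediateField K Ω := separableClosure K Ω
  set q := ringExpChar K with hq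
  haveI hexpK : ExpChar K q := ringExpChar.expChar K
  haveI hexpΩ : ExpChar Ω q := expChar_of_injective_algebraMap (algebraMap K Ω).injective q
  haveI hexpS : ExpChar ↥Ksep q :=
    expChar_of_injective_algebraMap (algebraMap K ↥Ksep).injective q
  -- basis of L₀ and separable power data
  let m := Module.finrank K ↥L₀
  let b : Module.Basis (Fin m) K ↥L₀ := Module.finBasis K ↥L₀
  let xs : Fin m → Ω := fun i => L₀.val (b i)
  have hpow : ∀ i, ∃ (n : ℕ) (y : ↥Ksep), (y : Ω) = xs i ^ q ^ n := by
    intro i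
    obtain ⟨n, hy⟩ := IsPurelyInseparable.pow_mem ↥Ksep q (xs i)
    obtain ⟨y, hy'⟩ := hy
    exact ⟨n, y, by rw [← hy']; rfl⟩
  choose ns ys hys using hpow
  haveI : Finite ↥(Set.range ys) := (Set.finite_range ys).to_subtype
  let Sg := FiniteGaloisIntermediateField.adjoin K (Set.range ys)
  let S : IntermediateField K ↥Ksep := Sg.toIntermediateField
  haveI hSfin : FiniteDimensional K ↥S := Sg.finiteDimensional
  haveI hSgal : IsGalois K ↥S := Sg.isGalois
  -- restriction homomorphisms
  let φ₁ : (Ω ≃ₐ[K] Ω) →* (↥Ksep ≃ₐ[K] ↥Ksep) := AlgEquiv.restrictNormalHom ↥Ksep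
  let φ₂ : (↥Ksep ≃ₐ[K] ↥Ksep) →* (↥S ≃ₐ[K] ↥S) := AlgEquiv.restrictNormalHom ↥S
  let φ : (Ω ≃ₐ[K] Ω) →* (↥S ≃ₐ[K] ↥S) := φ₂.comp φ₁
  have hs2 : Function.Surjective φ₂ := AlgEquiv.restrictNormalHom_surjective ↥Ksep
  have hs1 : Function.Surjective φ₁ := AlgEquiv.restrictNormalHom_surjective Ω
  have hφ : Function.Surjective φ := by
    have h := Function.Surjective.comp hs2 hs1
    simpa [φ, MonoidHom.coe_comp] using h
  -- commutation of restrictions with inclusions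
  have hcomm1 : ∀ (g : Ω ≃ₐ[K] Ω) (w : ↥Ksep), ((φ₁ g w : ↥Ksep) : Ω) = g (w : Ω) := by
    intro g w
    exact AlgEquiv.restrictNormal_commutes g ↥Ksep w
  have hcomm2 : ∀ (g : ↥Ksep ≃ₐ[K] ↥Ksep) (w : ↥S), ((φ₂ g w : ↥S) : ↥Ksep) = g (w : ↥Ksep) := by
    intro g w
    exact AlgEquiv.restrictNormal_commutes g ↥S w
  have hcomm : ∀ (g : Ω ≃ₐ[K] Ω) (w : ↥S), (((φ g w : ↥S) : ↥Ksep) : Ω) = g (((w : ↥Ksep)) : Ω) := by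
    intro g w
    have h2 : ((φ g w : ↥S) : ↥Ksep) = (φ₁ g) (w : ↥Ksep) := hcomm2 (φ₁ g) w
    rw [h2, hcomm1]
  -- q^n-th power maps are injective on Ω
  have hqinj : ∀ n : ℕ, Function.Injective (fun x : Ω => x ^ q ^ n) := by
    intro n x y hxy
    simp only at hxy
    have hsub : (x - y) ^ q ^ n = 0 := by
      rw [sub_pow_expChar_pow, hxy, sub_self]
    have := pow_eq_zero_iff (expChar_pow_pos Ω q n).ne' |>.mp hsub
    exact sub_eq_zero.mp this
  -- the kernel of φ is killed by ρ
  have hker : ∀ g : Ω ≃ₐ[K] Ω, φ g = 1 → ρ g = 1 := by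
    intro g hg
    apply hL₀kill
    have hfix : ∀ i, g (xs i) = xs i := by
      intro i
      have hyS : ys i ∈ S := FiniteGaloisIntermediateField.subset_adjoin K _ (Set.mem_range_self i)
      have h1 : g ((ys i : Ω)) = (ys i : Ω) := by
        have hc := hcomm g ⟨ys i, hyS⟩
        rw [hg] at hc
        simpa using hc.symm
      have h2 : (g (xs i)) ^ q ^ ns i = (xs i) ^ q ^ ns i := by
        rw [← _root_.map_pow, ← hys i, h1, hys i]
      exact hqinj (ns i) h2
    -- g fixes all of L₀
    intro x hx
    have hxspan : x ∈ Submodule.span K (Set.range xs) := by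
      have h0 : (⟨x, hx⟩ : ↥L₀) ∈ Submodule.span K (Set.range b) := by
        rw [b.span_eq]; trivial
      have h1 := Submodule.mem_map_of_mem (f := L₀.val.toLinearMap) h0
      rw [Submodule.map_span, ← Set.range_comp] at h1
      exact h1
    have hle : Submodule.span K (Set.range xs) ≤
        LinearMap.eqLocus (g : Ω ≃ₐ[K] Ω).toLinearMap LinearMap.id := by
      apply Submodule.span_le.mpr
      rintro _ ⟨i, rfl⟩
      exact hfix i
    exact hle hxspan
  -- lift ρ to the finite Galois group
  let φinv : (↥S ≃ₐ[K] ↥S) → (Ω ≃ₐ[K] Ω) := Function.surjInv hφ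
  have hφinv : Function.RightInverse φinv φ := Function.rightInverse_surjInv hφ
  have hkerle : φ.ker ≤ ρ.ker := by
    intro g hg
    exact MonoidHom.mem_ker.mpr (hker g (MonoidHom.mem_ker.mp hg))
  let ρbar : (↥S ≃ₐ[K] ↥S) →* GL (Fin r) ℤ := φ.liftOfRightInverse φinv hφinv ⟨ρ, hkerle⟩
  have hρbar : ∀ g : Ω ≃ₐ[K] Ω, ρbar (φ g) = ρ g := fun g =>
    φ.liftOfRightInverse_comp_apply φinv hφinv ⟨ρ, hkerle⟩ g
  -- the fixed field of the kernel of ρbar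
  let H : Subgroup (↥S ≃ₐ[K] ↥S) := ρbar.ker
  let Lf : IntermediateField K ↥S := IntermediateField.fixedField H
  haveI hLfGal : IsGalois K ↥Lf := IsGalois.of_fixedField_normal_subgroup H
  haveI hLfFin : FiniteDimensional K ↥Lf := inferInstance
  -- degree of Lf over K equals the index of H
  have hLfS : Module.finrank ↥Lf ↥S = Fintype.card ↥H :=
    (IntermediateField.finrank_fixedField_eq_card H).trans Nat.card_eq_fintype_card
  have htower : Module.finrank K ↥Lf * Module.finrank ↥Lf ↥S = Module.finrank K ↥S :=
    Module.finrank_mul_finrank K ↥Lf ↥S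
  have hcardaut : Fintype.card (↥S ≃ₐ[K] ↥S) = Module.finrank K ↥S :=
    Nat.card_eq_fintype_card.symm.trans (IsGalois.card_aut_eq_finrank K ↥S)
  have hindex : H.index * Nat.card ↥H = Nat.card (↥S ≃ₐ[K] ↥S) := Subgroup.index_mul_card H
  have hHpos : 0 < Nat.card ↥H := Nat.card_pos
  have hLfrank : Module.finrank K ↥Lf = H.index := by
    have h1 : Module.finrank K ↥Lf * Nat.card ↥H = H.index * Nat.card ↥H := by
      rw [hindex]
      simp only [Nat.card_eq_fintype_card]
      rw [hcardaut, ← hLfS]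
      exact htower
    exact Nat.eq_of_mul_eq_mul_right hHpos h1
  -- p does not divide the index
  have hpindex : ¬ p ∣ H.index := by
    intro hdvd
    rw [Subgroup.index_ker] at hdvd
    haveI : Fintype ↥ρbar.range := Fintype.ofFinite _
    rw [Nat.card_eq_fintype_card] at hdvd
    haveI : Fact p.Prime := ⟨hp⟩
    obtain ⟨x, hx⟩ := exists_prime_orderOf_dvd_card p hdvd
    have hxord : orderOf ((x : GL (Fin r) ℤ)) = p := by
      rw [← hx]
      exact orderOf_injective ρbar.range.subtype Subtype.coe_injective x
    have hx1 : ((x : GL (Fin r) ℤ)) ^ p = 1 := by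
      rw [← hxord]; exact pow_orderOf_eq_one _
    have := gl_no_p_torsion hp hr _ hx1
    rw [this, orderOf_one] at hxord
    exact hp.ne_one hxord.symm
  -- transfer the fixed field into the algebraic closure
  let j : ↥S →ₐ[K] Ω := (Ksep.val).comp S.val
  have hjinj : Function.Injective j := j.toRingHom.injective
  let L : IntermediateField K Ω := Lf.map j
  let e : ↥Lf ≃ₐ[K] ↥L := IntermediateField.equivMap Lf j
  haveI hLfin : FiniteDimensional K ↥L := Module.Finite.equiv e.toLinearEquiv
  haveI hLgal : IsGalois K ↥L := IsGalois.of_algEquiv e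
  have hLrank : Module.finrank K ↥L = Module.finrank K ↥Lf :=
    (LinearEquiv.finrank_eq e.toLinearEquiv).symm
  have hLnp : ¬ p ∣ Module.finrank K ↥L := by
    rw [hLrank, hLfrank]; exact hpindex
  have hLfix : ∀ g : Ω ≃ₐ[K] Ω, (∀ x ∈ L, g x = x) → ρ g = 1 := by
    intro g hg
    rw [← hρbar g]
    have hmem : φ g ∈ IntermediateField.fixingSubgroup Lf := by
      rw [IntermediateField.mem_fixingSubgroup_iff]
      intro y hy
      have hyL : j y ∈ L := ⟨y, hy, rfl⟩
      have h1 : g (j y) = j y := hg (j y) hyL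
      apply hjinj
      have hc := hcomm g y
      calc (j ((φ g) y) : Ω) = g (j y) := hc
      _ = j y := h1
    rw [IntermediateField.fixingSubgroup_fixedField H] at hmem
    exact hmem
  obtain ⟨hnt, hunits⟩ := tensor_div hp hdim ↥L hLnp
  exact ⟨L, hLfin, hLgal, hLnp, hLfix, hnt, hunits⟩
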